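/- Let a, b ∈ ℝ with b² < a². Then there exist m, n ∈ ℝ such that the function F = G1 + m·C1 + n·C2 : ℝ^6 → ℝ has vanishing derivative at the equilibrium e = (0, 0, a, 0, 0, b), and the Hessian quadratic form of F at e is definite (either positive definite or negative definite) on the subspace W = {v ∈ ℝ^6 : dC1(e)(v) = 0 and dC2(e)(v) = 0}. (Hence F is a Lyapunov function proving the nonlinear stability of e.) -/

import Mathlib

noncomputable section

/-- Casimir `C1`. -/
def C1fun (p : Fin 6 → ℝ) : ℝ :=
  (p 0 ^ 2 + p 1 ^ 2 + p 2 ^ 2 + p 3 ^ 2 + p 4 ^ 2 + p 5 ^ 2) / 2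

/-- Casimir `C2`. -/
def C2fun (p : Fin 6 → ℝ) : ℝ := p 0 * p 3 + p 1 * p 4 + p 2 * p 5

/-- The constant of motion `G1`. -/
def G1fun (l1 l2 l3 l4 : ℝ) (p : Fin 6 → ℝ) : ℝ :=
  p 1 ^ 2 / (l1^2 - l3^2) + p 2 ^ 2 / (l1^2 - l2^2) + p 3 ^ 2 / (l1^2 - l4^2)

@[simp] lemma vec6_0 {α : Type*} (a b c d e f : α) : (![a,b,c,d,e,f]) 0 = a := rfl
@[simp] lemma vec6_1 {α : Type*} (a b c d e f : α) : (![a,b,c,d,e,f]) 1 = b := rfl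
@[simp] lemma vec6_2 {α : Type*} (a b c d e f : α) : (![a,b,c,d,e,f]) 2 = c := rfl
@[simp] lemma vec6_3 {α : Type*} (a b c d e f : α) : (![a,b,c,d,e,f]) 3 = d := rfl
@[simp] lemma vec6_4 {α : Type*} (a b c d e f : α) : (![a,b,c,d,e,f]) 4 = e := rfl
@[simp] lemma vec6_5 {α : Type*} (a b c d e f : α) : (![a,b,c,d,e,f]) 5 = f := rfl

/-- Rank-one bilinear piece: `bil i j x v = x j * v i`. -/
def bil (i j : Fin 6) : (Fin 6 → ℝ) →L[ℝ] (Fin 6 → ℝ) →L[ℝ] ℝ :=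
  (ContinuousLinearMap.proj j : (Fin 6 → ℝ) →L[ℝ] ℝ).smulRight
    (ContinuousLinearMap.proj i : (Fin 6 → ℝ) →L[ℝ] ℝ)

@[simp] lemma bil_apply (i j : Fin 6) (x v : Fin 6 → ℝ) : bil i j x v = x j * v i := by
  simp [bil, smul_eq_mul]

/-- Hessian bilinear form of `G1 + m C1 + n C2`. -/
def LF (A B C m n : ℝ) : (Fin 6 → ℝ) →L[ℝ] (Fin 6 → ℝ) →L[ℝ] ℝ :=
  m • bil 0 0 + n • bil 0 3 + (2/A + m) • bil 1 1 + n • bil 1 4 + (2/B + m) • bil 2 2 +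
    n • bil 2 5 + n • bil 3 0 + (2/C + m) • bil 3 3 + n • bil 4 1 + m • bil 4 4 +
    n • bil 5 2 + m • bil 5 5

/-- Hessian bilinear form of `C1`. -/
def L1 : (Fin 6 → ℝ) →L[ℝ] (Fin 6 → ℝ) →L[ℝ] ℝ :=
  bil 0 0 + bil 1 1 + bil 2 2 + bil 3 3 + bil 4 4 + bil 5 5

/-- Hessian bilinear form of `C2`. -/
def L2 : (Fin 6 → ℝ) →L[ℝ] (Fin 6 → ℝ) →L[ℝ] ℝ :=
  bil 0 3 + bil 3 0 + bil 1 4 + bil 4 1 + bil 2 5 + bil 5 2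

lemma LF_apply (A B C m n : ℝ) (x v : Fin 6 → ℝ) :
    LF A B C m n x v = (m * x 0 + n * x 3) * v 0 + ((2/A + m) * x 1 + n * x 4) * v 1 +
      ((2/B + m) * x 2 + n * x 5) * v 2 + (n * x 0 + (2/C + m) * x 3) * v 3 +
      (n * x 1 + m * x 4) * v 4 + (n * x 2 + m * x 5) * v 5 := by
  simp [LF, ContinuousLinearMap.add_apply, ContinuousLinearMap.smul_apply, smul_eq_mul]
  ring

lemma L1_apply (x v : Fin 6 → ℝ) :
    L1 x v = x 0 * v 0 + x 1 * v 1 + x 2 * v 2 + x 3 * v 3 + x 4 * v 4 + x 5 * v 5 := by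
  simp [L1, ContinuousLinearMap.add_apply]

lemma L2_apply (x v : Fin 6 → ℝ) :
    L2 x v = x 3 * v 0 + x 0 * v 3 + x 4 * v 1 + x 1 * v 4 + x 5 * v 2 + x 2 * v 5 := by
  simp [L2, ContinuousLinearMap.add_apply]

lemma LF_sym (A B C m n : ℝ) (x y : Fin 6 → ℝ) :
    LF A B C m n x y = LF A B C m n y x := by
  rw [LF_apply, LF_apply]; ring

lemma L1_sym (x y : Fin 6 → ℝ) : L1 x y = L1 y x := by
  rw [L1_apply, L1_apply]; ring

lemma L2_sym (x y : Fin 6 → ℝ) : L2 x y = L2 y x := by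
  rw [L2_apply, L2_apply]; ring

lemma quad_hasFDerivAt (L : (Fin 6 → ℝ) →L[ℝ] (Fin 6 → ℝ) →L[ℝ] ℝ)
    (hsym : ∀ x y, L x y = L y x) (x : Fin 6 → ℝ) :
    HasFDerivAt (fun p => L p p / 2) (L x) x := by
  have hb := L.isBoundedBilinearMap
  have h0 : HasFDerivAt (fun p : Fin 6 → ℝ => (p, p))
      ((ContinuousLinearMap.id ℝ (Fin 6 → ℝ)).prod (ContinuousLinearMap.id ℝ (Fin 6 → ℝ))) x :=
    (hasFDerivAt_id x).prodMk (hasFDerivAt_id x)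
  have h1 := HasFDerivAt.comp (g := fun q : (Fin 6 → ℝ) × (Fin 6 → ℝ) => L q.1 q.2)
    (f := fun p : Fin 6 → ℝ => (p, p)) x (hb.hasFDerivAt (x, x)) h0
  have h2 := h1.const_mul (2⁻¹ : ℝ)
  have heq : (fun p : Fin 6 → ℝ => 2⁻¹ * ((fun q : (Fin 6 → ℝ) × (Fin 6 → ℝ) => L q.1 q.2) ∘
      fun p : Fin 6 → ℝ => (p, p)) p) = fun p => L p p / 2 := by
    funext p; simp [Function.comp]; ring
  rw [heq] at h2
  refine h2.congr_fderiv ?_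
  ext v
  simp [hb.deriv_apply, hsym v x, smul_eq_mul]
  ring

lemma quad_fderiv (L : (Fin 6 → ℝ) →L[ℝ] (Fin 6 → ℝ) →L[ℝ] ℝ)
    (hsym : ∀ x y, L x y = L y x) (x : Fin 6 → ℝ) :
    fderiv ℝ (fun p => L p p / 2) x = L x :=
  (quad_hasFDerivAt L hsym x).fderiv

lemma quad_fderiv_fderiv (L : (Fin 6 → ℝ) →L[ℝ] (Fin 6 → ℝ) →L[ℝ] ℝ)
    (hsym : ∀ x y, L x y = L y x) (x : Fin 6 → ℝ) :
    fderiv ℝ (fderiv ℝ (fun p => L p p / 2)) x = L := by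
  have : fderiv ℝ (fun p => L p p / 2) = ⇑L := funext fun y => quad_fderiv L hsym y
  rw [this, ContinuousLinearMap.fderiv]

lemma block_nonpos (m n β p q : ℝ) (hm : m < 0) (hdet : 0 < m * β - n ^ 2) :
    m * p ^ 2 + 2 * n * p * q + β * q ^ 2 ≤ 0 := by
  nlinarith [sq_nonneg (m * p + n * q), sq_nonneg q]

lemma block_neg (m n β p q : ℝ) (hm : m < 0) (hdet : 0 < m * β - n ^ 2)
    (hpq : p ≠ 0 ∨ q ≠ 0) :
    m * p ^ 2 + 2 * n * p * q + β * q ^ 2 < 0 := by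
  rcases eq_or_ne q 0 with hq | hq
  · subst hq
    have hp : p ≠ 0 := by tauto
    have := sq_pos_of_ne_zero hp
    nlinarith
  · have := sq_pos_of_ne_zero hq
    nlinarith [sq_nonneg (m * p + n * q)]

lemma C1_eq : C1fun = fun p => L1 p p / 2 := by
  funext p
  rw [L1_apply]
  simp [C1fun]
  ring

lemma C2_eq : C2fun = fun p => L2 p p / 2 := by
  funext p
  rw [L2_apply]
  simp [C2fun]
  ring

lemma F_eq (l1 l2 l3 l4 m n : ℝ) :
    (fun p => G1fun l1 l2 l3 l4 p + m * C1fun p + n * C2fun p)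
      = fun p => LF (l1^2 - l3^2) (l1^2 - l2^2) (l1^2 - l4^2) m n p p / 2 := by
  funext p
  rw [LF_apply]
  simp [G1fun, C1fun, C2fun]
  ring

set_option maxHeartbeats 1000000 in
/-- `G1 + m C1 + n C2` is a Lyapunov function for the equilibrium
`(0,0,a,0,0,b)`: its derivative vanishes there, and its Hessian is definite
(positive or negative) on `W = ker dC1(e) ∩ ker dC2(e)`. -/
theorem G1_lyapunov_function
    (l1 l2 l3 l4 : ℝ) (h12 : l2 < l1) (h23 : l3 < l2) (h34 : l4 < l3)
    (s12 : 0 < l1 + l2) (s13 : 0 < l1 + l3) (s14 : 0 < l1 + l4)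
    (s23 : 0 < l2 + l3) (s24 : 0 < l2 + l4) (s34 : 0 < l3 + l4)
    (a b : ℝ) (hba : b ^ 2 < a ^ 2) :
    ∃ m n : ℝ,
      fderiv ℝ (fun p => G1fun l1 l2 l3 l4 p + m * C1fun p + n * C2fun p)
          ![0, 0, a, 0, 0, b] = 0 ∧
      ((∀ v : Fin 6 → ℝ, v ≠ 0 →
          fderiv ℝ C1fun ![0, 0, a, 0, 0, b] v = 0 →
          fderiv ℝ C2fun ![0, 0, a, 0, 0, b] v = 0 →
          0 < fderiv ℝ (fderiv ℝ (fun p => G1fun l1 l2 l3 l4 p + m * C1fun p + n * C2fun p))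
                ![0, 0, a, 0, 0, b] v v) ∨
       (∀ v : Fin 6 → ℝ, v ≠ 0 →
          fderiv ℝ C1fun ![0, 0, a, 0, 0, b] v = 0 →
          fderiv ℝ C2fun ![0, 0, a, 0, 0, b] v = 0 →
          fderiv ℝ (fderiv ℝ (fun p => G1fun l1 l2 l3 l4 p + m * C1fun p + n * C2fun p))
                ![0, 0, a, 0, 0, b] v v < 0)) := by
  have hA : (0:ℝ) < l1^2 - l3^2 := by nlinarith
  have hB : (0:ℝ) < l1^2 - l2^2 := by nlinarith
  have hC : (0:ℝ) < l1^2 - l4^2 := by nlinarith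
  have h24 : (0:ℝ) < l2^2 - l4^2 := by nlinarith
  have h23' : (0:ℝ) < l2^2 - l3^2 := by nlinarith
  have ha2 : (0:ℝ) < a^2 := lt_of_le_of_lt (sq_nonneg b) hba
  have hD : (0:ℝ) < a^2 - b^2 := by linarith
  set m : ℝ := -(2*a^2)/((l1^2 - l2^2)*(a^2 - b^2)) with hm_def
  set n : ℝ := (2*a*b)/((l1^2 - l2^2)*(a^2 - b^2)) with hn_def
  have hm : m < 0 := by
    rw [hm_def]
    apply div_neg_of_neg_of_pos
    · nlinarith
    · positivity
  have hdetC : 0 < m * (2/(l1^2 - l4^2) + m) - n^2 := by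
    have e : m * (2/(l1^2 - l4^2) + m) - n^2
        = 4*a^2*(l2^2 - l4^2) / ((l1^2 - l2^2)^2*(l1^2 - l4^2)*(a^2 - b^2)) := by
      rw [hm_def, hn_def]
      field_simp
      ring
    rw [e]
    apply div_pos
    · nlinarith [mul_pos ha2 h24]
    · positivity
  have hdetA : 0 < m * (2/(l1^2 - l3^2) + m) - n^2 := by
    have e : m * (2/(l1^2 - l3^2) + m) - n^2
        = 4*a^2*(l2^2 - l3^2) / ((l1^2 - l2^2)^2*(l1^2 - l3^2)*(a^2 - b^2)) := by
      rw [hm_def, hn_def]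
      field_simp
      ring
    rw [e]
    apply div_pos
    · nlinarith [mul_pos ha2 h23']
    · positivity
  have c2 : (2/(l1^2 - l2^2) + m) * a + n * b = 0 := by
    rw [hm_def, hn_def]
    field_simp
    ring
  have c5 : n * a + m * b = 0 := by
    rw [hm_def, hn_def]
    field_simp
    ring
  refine ⟨m, n, ?_, Or.inr ?_⟩
  · rw [F_eq, quad_fderiv _ (LF_sym _ _ _ _ _)]
    ext v
    rw [ContinuousLinearMap.zero_apply, LF_apply]
    simp only [vec6_0, vec6_1, vec6_2, vec6_3, vec6_4, vec6_5]
    linear_combination v 2 * c2 + v 5 * c5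
  · intro v hv hc1 hc2
    have e1 : a * v 2 + b * v 5 = 0 := by
      rw [C1_eq, quad_fderiv _ L1_sym, L1_apply] at hc1
      simp only [vec6_0, vec6_1, vec6_2, vec6_3, vec6_4, vec6_5] at hc1
      linear_combination hc1
    have e2 : b * v 2 + a * v 5 = 0 := by
      rw [C2_eq, quad_fderiv _ L2_sym, L2_apply] at hc2
      simp only [vec6_0, vec6_1, vec6_2, vec6_3, vec6_4, vec6_5] at hc2
      linear_combination hc2
    have hv2 : v 2 = 0 := by
      have h : (a^2 - b^2) * v 2 = 0 := by linear_combination a * e1 - b * e2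
      rcases mul_eq_zero.mp h with h' | h'
      · exact absurd h' hD.ne'
      · exact h'
    have hv5 : v 5 = 0 := by
      have h : (a^2 - b^2) * v 5 = 0 := by linear_combination a * e2 - b * e1
      rcases mul_eq_zero.mp h with h' | h'
      · exact absurd h' hD.ne'
      · exact h'
    rw [F_eq, quad_fderiv_fderiv _ (LF_sym _ _ _ _ _), LF_apply, hv2, hv5]
    have E1le := block_nonpos m n (2/(l1^2 - l4^2) + m) (v 0) (v 3) hm hdetC
    have E2le := block_nonpos m n (2/(l1^2 - l3^2) + m) (v 4) (v 1) hm hdetA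
    have key : v 0 ≠ 0 ∨ v 3 ≠ 0 ∨ v 1 ≠ 0 ∨ v 4 ≠ 0 := by
      by_contra hcon
      push_neg at hcon
      obtain ⟨k0, k3, k1, k4⟩ := hcon
      apply hv
      funext i
      fin_cases i
      · exact k0
      · exact k1
      · exact hv2
      · exact k3
      · exact k4
      · exact hv5
    rcases key with h | h | h | h
    · have := block_neg m n (2/(l1^2 - l4^2) + m) (v 0) (v 3) hm hdetC (Or.inl h)
      nlinarith
    · have := block_neg m n (2/(l1^2 - l4^2) + m) (v 0) (v 3) hm hdetC (Or.inr h)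
      nlinarith
    · have := block_neg m n (2/(l1^2 - l3^2) + m) (v 4) (v 1) hm hdetA (Or.inr h)
      nlinarith
    · have := block_neg m n (2/(l1^2 - l3^2) + m) (v 4) (v 1) hm hdetA (Or.inl h)
      nlinarith
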